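/- Let G be a finite simple triangle-free graph on n vertices with minimum degree δ ≥ 3. Then every edge 2-coloring of G uses at most (n/2)·(1 + 1/(δ − 1)) colors; equivalently, if c is the number of colors of an edge 2-coloring of G, then 2·c·(δ − 1) ≤ n·δ. -/

import Mathlib

open SimpleGraph

/-- `C` is an edge 2-coloring of `G`: for every vertex, the edges incident to it
carry at most 2 distinct colors. -/
def IsEdge2Coloring {V : Type*} (G : SimpleGraph V) (C : Sym2 V → ℕ) : Prop :=
  ∀ v : V, (C '' G.incidenceSet v).ncard ≤ 2

/-- The number of distinct colors used by a coloring `C` on the edges of `G`. -/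
noncomputable def numColors {V : Type*} (G : SimpleGraph V) (C : Sym2 V → ℕ) : ℕ :=
  (C '' G.edgeSet).ncard

/-- `OPT G`: the maximum number of colors used by an edge 2-coloring of `G`. -/
noncomputable def OPT {V : Type*} (G : SimpleGraph V) : ℕ :=
  sSup {n : ℕ | ∃ C : Sym2 V → ℕ, IsEdge2Coloring G C ∧ numColors G C = n}

/-- `M` is a matching of `G`, given as a set of edges: the edges belong to `G` and
are pairwise vertex-disjoint. -/
def IsMatchingSet {V : Type*} (G : SimpleGraph V) (M : Set (Sym2 V)) : Prop :=
  M ⊆ G.edgeSet ∧ ∀ e ∈ M, ∀ f ∈ M, e ≠ f → ∀ v : V, v ∈ e → v ∉ f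

/-- `ALG G M`: number of colors produced by the matching based algorithm, i.e.
`|M|` plus the number of connected components of `G − M`. -/
noncomputable def ALG {V : Type*} (G : SimpleGraph V) (M : Set (Sym2 V)) : ℕ :=
  M.ncard + Nat.card (G.deleteEdges M).ConnectedComponent

/-- `H` is a characteristic subgraph of `G` with respect to the coloring `C`:
a subgraph of `G` containing exactly one edge of each color used by `C`. -/
def IsCharSubgraph {V : Type*} (G : SimpleGraph V) (C : Sym2 V → ℕ)
    (H : SimpleGraph V) : Prop :=
  H ≤ G ∧ ∀ c ∈ C '' G.edgeSet, ∃! e, e ∈ H.edgeSet ∧ C e = c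

open Finset

section Aux

variable {V : Type*} [Fintype V] [DecidableEq V] (G : SimpleGraph V) [DecidableRel G.Adj]
  (C : Sym2 V → ℕ) (δ : ℕ)

/-- The palette of colors seen at `v`. -/
private def pal (v : V) : Finset ℕ := (G.neighborFinset v).image (fun w => C s(v, w))

/-- Number of edges of color `k` at `v`. -/
private def dk (k : ℕ) (v : V) : ℕ :=
  ((G.neighborFinset v).filter (fun w => C s(v, w) = k)).card

/-- Support of color `k`. -/
private def supp (k : ℕ) : Finset V := Finset.univ.filter (fun v => 0 < dk G C k v)

/-- The weight of `v` for color `k`. -/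
private def wt (k : ℕ) (v : V) : ℕ := max (δ - dk G C k v) 1

variable {G C}

set_option linter.unusedSectionVars false

private lemma mem_pal_iff {k : ℕ} {v : V} :
    k ∈ pal G C v ↔ ∃ w ∈ G.neighborFinset v, C s(v, w) = k := by
  simp [pal]

private lemma dk_pos_iff {k : ℕ} {v : V} : 0 < dk G C k v ↔ k ∈ pal G C v := by
  simp [dk, pal, Finset.card_pos, Finset.filter_nonempty_iff]

private lemma mem_supp_iff {k : ℕ} {v : V} : v ∈ supp G C k ↔ k ∈ pal G C v := by
  simp [supp, dk_pos_iff]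

private lemma mem_supp_of_adj {k : ℕ} {v w : V} (h : G.Adj v w) (hk : C s(v, w) = k) :
    w ∈ supp G C k := by
  simp only [supp, Finset.mem_filter, Finset.mem_univ, true_and, dk, Finset.card_pos]
  exact ⟨v, Finset.mem_filter.2 ⟨(mem_neighborFinset _ _ _).2 h.symm, by rwa [Sym2.eq_swap]⟩⟩

private lemma sum_dk (v : V) : ∑ k ∈ pal G C v, dk G C k v = G.degree v := by
  rw [← card_neighborFinset_eq_degree]
  exact (Finset.card_eq_sum_card_fiberwise
    (fun w hw => Finset.mem_image_of_mem _ hw)).symm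

/-- Per-vertex bound: the total weight carried by a vertex is at most `δ`. -/
private lemma sum_wt_le (v : V) (hpal : (pal G C v).card ≤ 2) (hdeg : δ ≤ G.degree v)
    (hδ3 : 3 ≤ δ) : ∑ k ∈ pal G C v, wt G C δ k v ≤ δ := by
  have hsum := sum_dk (G := G) (C := C) v
  have h2 : (pal G C v).card = 0 ∨ (pal G C v).card = 1 ∨ (pal G C v).card = 2 := by omega
  rcases h2 with h | h | h
  · rw [Finset.card_eq_zero] at h
    simp [h]
  · obtain ⟨a, ha⟩ := Finset.card_eq_one.mp h
    rw [ha] at hsum ⊢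
    rw [Finset.sum_singleton] at hsum ⊢
    unfold wt; omega
  · obtain ⟨a, b, hab, hP2⟩ := Finset.card_eq_two.mp h
    have hda : 0 < dk G C a v := dk_pos_iff.2 (by rw [hP2]; simp)
    have hdb : 0 < dk G C b v := dk_pos_iff.2 (by rw [hP2]; simp)
    rw [hP2] at hsum ⊢
    rw [Finset.sum_pair hab] at hsum ⊢
    unfold wt; omega

/-- Per-color bound: each used color collects weight at least `2δ - 2` from its support. -/
private lemma sum_wt_ge (hfree : G.CliqueFree 3) (hδ3 : 3 ≤ δ)
    {k : ℕ} {z : V} (hz : z ∈ supp G C k) :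
    2 * δ - 2 ≤ ∑ v ∈ supp G C k, wt G C δ k v := by
  set S := supp G C k with hS
  have hone : ∀ v ∈ S, 1 ≤ wt G C δ k v := fun v _ => le_max_right _ 1
  by_cases hq : 2 * δ - 2 ≤ S.card
  · calc 2 * δ - 2 ≤ S.card := hq
      _ = ∑ v ∈ S, 1 := by simp
      _ ≤ ∑ v ∈ S, wt G C δ k v := Finset.sum_le_sum hone
  · push_neg at hq
    set Δ := dk G C k z with hΔdef
    have hΔ1 : 1 ≤ Δ := by
      have := (Finset.mem_filter.1 hz).2
      omega
    set N := (G.neighborFinset z).filter (fun w => C s(z, w) = k) with hN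
    have hNcard : N.card = Δ := rfl
    have hNS : N ⊆ S := by
      intro w hw
      obtain ⟨hw1, hw2⟩ := Finset.mem_filter.1 hw
      exact mem_supp_of_adj ((mem_neighborFinset _ _ _).1 hw1) hw2
    have hzN : z ∉ N := by
      intro h
      exact G.irrefl ((mem_neighborFinset _ _ _).1 (Finset.mem_filter.1 h).1)
    have hA : insert z N ⊆ S := by
      intro x hx
      rcases Finset.mem_insert.1 hx with rfl | hx
      · exact hz
      · exact hNS hx
    have hq1 : Δ + 1 ≤ S.card := by
      have : (insert z N).card = Δ + 1 := by
        rw [Finset.card_insert_of_notMem hzN, hNcard]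
      rw [← this]
      exact Finset.card_le_card hA
    have hnb : ∀ w ∈ N, dk G C k w ≤ S.card - Δ := by
      intro w hw
      obtain ⟨hw1, hw2⟩ := Finset.mem_filter.1 hw
      have hzw : G.Adj z w := (mem_neighborFinset _ _ _).1 hw1
      have hsub : (G.neighborFinset w).filter (fun u => C s(w, u) = k) ⊆ S \ N := by
        intro u hu
        obtain ⟨hu1, hu2⟩ := Finset.mem_filter.1 hu
        have hwu : G.Adj w u := (mem_neighborFinset _ _ _).1 hu1
        refine Finset.mem_sdiff.2 ⟨mem_supp_of_adj hwu hu2, ?_⟩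
        intro huN
        obtain ⟨hu3, _⟩ := Finset.mem_filter.1 huN
        have hzu : G.Adj z u := (mem_neighborFinset _ _ _).1 hu3
        exact hfree {z, w, u} (is3Clique_triple_iff.2 ⟨hzw, hzu, hwu⟩)
      calc dk G C k w ≤ (S \ N).card := Finset.card_le_card hsub
        _ = S.card - Δ := by rw [Finset.card_sdiff_of_subset hNS, hNcard]
    have hsplit : ∑ v ∈ S \ insert z N, wt G C δ k v + ∑ v ∈ insert z N, wt G C δ k v
        = ∑ v ∈ S, wt G C δ k v := Finset.sum_sdiff hA
    have h1 : ∑ v ∈ insert z N, wt G C δ k v = wt G C δ k z + ∑ v ∈ N, wt G C δ k v :=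
      Finset.sum_insert hzN
    have h3 : Δ * max (δ - (S.card - Δ)) 1 ≤ ∑ v ∈ N, wt G C δ k v := by
      rw [← hNcard]
      have := Finset.card_nsmul_le_sum N (wt G C δ k) (max (δ - (S.card - Δ)) 1)
        (fun w hw => by
          unfold wt
          exact max_le_max (Nat.sub_le_sub_left (hnb w hw) δ) le_rfl)
      simpa [smul_eq_mul, hNcard] using this
    have h4 : S.card - 1 - Δ ≤ ∑ v ∈ S \ insert z N, wt G C δ k v := by
      calc S.card - 1 - Δ = (S \ insert z N).card := by
            rw [Finset.card_sdiff_of_subset hA, Finset.card_insert_of_notMem hzN, hNcard]; omega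
        _ = ∑ v ∈ S \ insert z N, 1 := by simp
        _ ≤ _ := Finset.sum_le_sum (fun v hv => hone v (Finset.mem_sdiff.1 hv).1)
    set q := S.card
    set m := max (δ - (q - Δ)) 1 with hm
    set M := wt G C δ k z with hM
    have hm1 : 1 ≤ m := le_max_right _ _
    have hm2 : δ + Δ ≤ m + q := by
      have : δ - (q - Δ) ≤ m := le_max_left _ _
      omega
    have hP : Δ + m ≤ Δ * m + 1 := by
      rcases Nat.lt_or_ge Δ 2 with h | h
      · have hΔe : Δ = 1 := by omega
        rw [hΔe]; omega
      · rcases Nat.lt_or_ge m 2 with h' | h'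
        · have hme : m = 1 := by omega
          rw [hme]; omega
        · have := Nat.add_le_mul h h'; omega
    have hM1 : 1 ≤ M := le_max_right _ _
    have hM2 : δ ≤ M + Δ := by
      have : δ - Δ ≤ M := le_max_left _ _
      omega
    have harith : 2 * δ - 2 ≤ M + (Δ * m + (q - 1 - Δ)) := by
      have hq2 : q + 3 ≤ 2 * δ := by omega
      set P := Δ * m
      omega
    calc 2 * δ - 2 ≤ M + (Δ * m + (q - 1 - Δ)) := harith
      _ ≤ M + (∑ v ∈ N, wt G C δ k v + ∑ v ∈ S \ insert z N, wt G C δ k v) :=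
          Nat.add_le_add le_rfl (Nat.add_le_add h3 h4)
      _ = ∑ v ∈ S \ insert z N, wt G C δ k v + ∑ v ∈ insert z N, wt G C δ k v := by
          rw [h1]; ring
      _ = ∑ v ∈ S, wt G C δ k v := hsplit

private lemma coe_pal (v : V) : (↑(pal G C v) : Set ℕ) = C '' G.incidenceSet v := by
  ext k
  simp only [pal, Finset.coe_image, Set.mem_image, Finset.mem_coe, mem_neighborFinset]
  constructor
  · rintro ⟨w, hw, rfl⟩
    exact ⟨s(v, w), G.mk'_mem_incidenceSet_left_iff.2 hw, rfl⟩
  · rintro ⟨e, he, rfl⟩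
    obtain ⟨w, rfl⟩ := Sym2.mem_iff_exists.1 he.2
    exact ⟨w, (G.mem_edgeSet).1 he.1, rfl⟩

end Aux

/-- A triangle-free graph on `n` vertices with minimum degree `δ ≥ 3` admits no edge
2-coloring with more than `(n/2)(1 + 1/(δ−1))` colors: `2·c·(δ−1) ≤ n·δ`. -/
theorem numColors_le_of_minDegree_triangleFree {V : Type*} [Fintype V] (G : SimpleGraph V)
    (hfree : G.CliqueFree 3) (δ : ℕ)
    (hδ3 : 3 ≤ δ) (hδ : ∀ v : V, δ ≤ (G.neighborSet v).ncard)
    (C : Sym2 V → ℕ) (hC : IsEdge2Coloring G C) :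
    2 * numColors G C * (δ - 1) ≤ Fintype.card V * δ := by
  letI : DecidableEq V := Classical.decEq V
  letI : DecidableRel G.Adj := Classical.decRel _
  set 𝒞 := G.edgeFinset.image C with h𝒞
  have hnum : numColors G C = 𝒞.card := by
    have h : C '' G.edgeSet = ↑𝒞 := by
      ext k
      simp [h𝒞, Set.mem_image, Finset.mem_image, mem_edgeFinset]
    show (C '' G.edgeSet).ncard = 𝒞.card
    rw [h, Set.ncard_coe_finset]
  have hdeg : ∀ v : V, δ ≤ G.degree v := by
    intro v
    have h := hδ v
    rw [Set.ncard_eq_toFinset_card'] at h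
    rwa [← card_neighborFinset_eq_degree, neighborFinset_def]
  have hpal2 : ∀ v : V, (pal G C v).card ≤ 2 := by
    intro v
    have h := hC v
    rwa [← coe_pal, Set.ncard_coe_finset] at h
  have key1 : ∀ k ∈ 𝒞, 2 * δ - 2 ≤ ∑ v ∈ supp G C k, wt G C δ k v := by
    intro k hk
    obtain ⟨e, he, hCe⟩ := Finset.mem_image.1 hk
    induction e with
    | _ x y =>
      have hxy : G.Adj x y := mem_edgeFinset.1 he
      exact sum_wt_ge δ hfree hδ3 (mem_supp_of_adj hxy.symm (by rwa [Sym2.eq_swap]))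
  have key2 : ∀ v : V, ∑ k ∈ pal G C v, wt G C δ k v ≤ δ :=
    fun v => sum_wt_le δ v (hpal2 v) (hdeg v) hδ3
  have swap : ∑ k ∈ 𝒞, ∑ v ∈ supp G C k, wt G C δ k v
      = ∑ v ∈ Finset.univ, ∑ k ∈ pal G C v, wt G C δ k v := by
    refine Finset.sum_comm' ?_
    intro k v
    simp only [Finset.mem_univ, and_true, true_and]
    constructor
    · rintro ⟨_, hv⟩
      exact mem_supp_iff.1 hv
    · intro hv
      refine ⟨?_, mem_supp_iff.2 hv⟩
      obtain ⟨w, hw, rfl⟩ := mem_pal_iff.1 hv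
      exact Finset.mem_image.2
        ⟨s(v, w), mem_edgeFinset.2 ((mem_neighborFinset _ _ _).1 hw), rfl⟩
  have main : (2 * δ - 2) * 𝒞.card ≤ Fintype.card V * δ := by
    calc (2 * δ - 2) * 𝒞.card = ∑ _k ∈ 𝒞, (2 * δ - 2) := by
          rw [Finset.sum_const, smul_eq_mul, mul_comm]
      _ ≤ ∑ k ∈ 𝒞, ∑ v ∈ supp G C k, wt G C δ k v := Finset.sum_le_sum key1
      _ = ∑ v ∈ Finset.univ, ∑ k ∈ pal G C v, wt G C δ k v := swap
      _ ≤ ∑ _v ∈ Finset.univ, δ := Finset.sum_le_sum (fun v _ => key2 v)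
      _ = Fintype.card V * δ := by rw [Finset.sum_const, Finset.card_univ, smul_eq_mul]
  rw [hnum]
  calc 2 * 𝒞.card * (δ - 1) = (2 * (δ - 1)) * 𝒞.card := by ring
    _ = (2 * δ - 2) * 𝒞.card := by rw [show 2 * (δ - 1) = 2 * δ - 2 by omega]
    _ ≤ Fintype.card V * δ := main
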